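/- Let κ be a regular uncountable cardinal, let P be a forcing poset satisfying the κ-chain condition, and let (p_α)_{α<κ} be a κ-sequence of conditions in P. Then there exists α < κ such that p_α forces (in the forcing language of P) that the set {β < κ : p_β ∈ Ġ} is unbounded in κ, where Ġ is the canonical name for the generic filter. -/

import Mathlib

/-- Let `κ` be regular uncountable, `P` a `κ`-cc forcing poset, and `(p α)_{α<κ}` a
sequence of conditions.  Then some `p α` forces (in the sense of the forcing relation,
rendered here by its density unfolding) that `{β < κ : p β ∈ Ġ}` is unbounded in `κ`:
below every `q ≤ p α` and above every `η < κ` there are `r ≤ q` and `β` with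
`η ≤ β < κ` and `r ≤ p β` (so that `r` forces `p β ∈ Ġ`). -/
theorem stmt0 {P : Type} [Preorder P]
    (κ : Cardinal) (hκreg : κ.IsRegular) (hκunc : Cardinal.aleph0 < κ)
    (hcc : ∀ A : Set P,
      (∀ p ∈ A, ∀ q ∈ A, p ≠ q → ¬ ∃ r : P, r ≤ p ∧ r ≤ q) → Cardinal.mk A < κ)
    (p : Ordinal → P) :
    ∃ α : Ordinal, α < κ.ord ∧
      ∀ q : P, q ≤ p α → ∀ η : Ordinal, η < κ.ord →
        ∃ r : P, r ≤ q ∧ ∃ β : Ordinal, η ≤ β ∧ β < κ.ord ∧ r ≤ p β := by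
  by_contra hcon
  push_neg at hcon
  -- for each α < κ.ord, choose a bad q α ≤ p α and a bound η α
  have hchoice : ∀ α : Ordinal, ∃ (qa : P) (ηa : Ordinal), α < κ.ord →
      qa ≤ p α ∧ ηa < κ.ord ∧
      ∀ r : P, r ≤ qa → ∀ β : Ordinal, ηa ≤ β → β < κ.ord → ¬ r ≤ p β := by
    intro α
    by_cases hα : α < κ.ord
    · obtain ⟨qa, hq, ηa, hη, hbad⟩ := hcon α hα
      refine ⟨qa, ηa, fun _ => ⟨hq, hη, ?_⟩⟩
      intro r hr β h1 h2
      exact hbad r hr β h1 h2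
    · exact ⟨p α, 0, fun h => absurd h hα⟩
  choose q η hq using hchoice
  -- key incompatibility
  have hkey : ∀ α β : Ordinal, α < κ.ord → β < κ.ord → η α ≤ β →
      ¬ ∃ r : P, r ≤ q α ∧ r ≤ q β := by
    rintro α β hα hβ hle ⟨r, hr1, hr2⟩
    exact (hq α hα).2.2 r hr1 β hle hβ (hr2.trans (hq β hβ).1)
  -- the set of all chosen conditions
  set Q : Set P := {x | ∃ α : Ordinal, α < κ.ord ∧ x = q α} with hQ
  -- antichains inside Q
  set S : Set (Set P) := {A | A ⊆ Q ∧
    ∀ x ∈ A, ∀ y ∈ A, x ≠ y → ¬ ∃ r : P, r ≤ x ∧ r ≤ y} with hS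
  obtain ⟨M, hM⟩ := zorn_subset S (by
    intro c hc hchain
    refine ⟨⋃₀ c, ⟨?_, ?_⟩, fun s hs => Set.subset_sUnion_of_mem hs⟩
    · exact Set.sUnion_subset fun A hA => (hc hA).1
    · rintro x ⟨A, hA, hxA⟩ y ⟨B, hB, hyB⟩ hxy
      rcases hchain.total hA hB with h | h
      · exact (hc hB).2 x (h hxA) y hyB hxy
      · exact (hc hA).2 x hxA y (h hyB) hxy)
  have hMS : M ∈ S := hM.prop
  have hMcard : Cardinal.mk M < κ := hcc M hMS.2
  -- choose index for each element of M
  have hidx : ∀ m : M, ∃ α : Ordinal, α < κ.ord ∧ (m : P) = q α := fun m => hMS.1 m.2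
  choose idx hidx1 hidx2 using hidx
  -- the sup of the bounds
  set σ : Ordinal := iSup (fun m : M => η (idx m)) with hσ
  have hσlt : σ < κ.ord := by
    apply Cardinal.iSup_lt_ord_of_isRegular hκreg hMcard
    intro m
    exact (hq (idx m) (hidx1 m)).2.1
  -- q σ is incompatible with everything in M
  have hnew : ∀ m : M, ¬ ∃ r : P, r ≤ (m : P) ∧ r ≤ q σ := by
    intro m hr
    rw [hidx2 m] at hr
    exact hkey (idx m) σ (hidx1 m) hσlt (Ordinal.le_iSup _ m) hr
  have hnotmem : q σ ∉ M := fun h =>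
    hnew ⟨q σ, h⟩ ⟨q σ, le_refl _, le_refl _⟩
  -- but insert (q σ) M is a bigger antichain, contradiction
  have : insert (q σ) M ∈ S := by
    constructor
    · rintro x (rfl | hx)
      · exact ⟨σ, hσlt, rfl⟩
      · exact hMS.1 hx
    · rintro x (rfl | hx) y (rfl | hy) hxy
      · exact absurd rfl hxy
      · rintro ⟨r, h1, h2⟩
        exact hnew ⟨y, hy⟩ ⟨r, h2, h1⟩
      · exact hnew ⟨x, hx⟩
      · exact hMS.2 x hx y hy hxy
  have := hM.eq_of_subset this (Set.subset_insert _ _)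
  exact hnotmem (this ▸ Set.mem_insert _ _)
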